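/- Let γ₁ = α₁β₁ and γ₂ = α₂β₂ be elements of a unipotent group with logarithms c_i = log γ_i, a_i = log α_i ∈ ⊕_{p<0} g^{p,q}, b_i = log β_i ∈ f ∩ m⁻¹, all inside a bigraded nilpotent Lie algebra where brackets of elements of total bidegree summing below (−2,−2) vanish. Writing x^{p,q} for the g^{p,q}-component, if γ = γ₁γ₂ then: a^{-1,0} = a₁^{-1,0} + a₂^{-1,0}; b^{0,-1} = b₁^{0,-1} + b₂^{0,-1}; c^{-1,-1} = c₁^{-1,-1} + c₂^{-1,-1} + ½[a₁^{-1,0}, b₂^{0,-1}] + ½[b₁^{0,-1}, a₂^{-1,0}]; and a^{-1,-1} = a₁^{-1,-1} + a₂^{-1,-1} + [b₁^{0,-1}, a₂^{-1,0}]. -/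

import Mathlib

set_option maxHeartbeats 1000000
set_option synthInstance.maxHeartbeats 400000
set_option linter.unusedSectionVars false

open NormedSpace DirectSum Finset

namespace Stmt10

attribute [local instance 100] LieRing.ofAssociativeRing

lemma iSup2_induction {R Mod : Type*} [Semiring R] [AddCommMonoid Mod] [Module R Mod]
    {ι : Type*} {S : ι → Prop} (p : ι → Submodule R Mod) {C : Mod → Prop} {x : Mod}
    (hx : x ∈ ⨆ pq, ⨆ _ : S pq, p pq)
    (mem : ∀ pq, S pq → ∀ x ∈ p pq, C x) (h0 : C 0)
    (hadd : ∀ x y, C x → C y → C (x + y)) : C x := by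
  have mem' : ∀ pq, ∀ x ∈ (⨆ _ : S pq, p pq), C x := by
    intro pq x hx
    by_cases h : S pq
    · rw [iSup_pos h] at hx; exact mem pq h x hx
    · rw [iSup_neg h] at hx
      simp only [Submodule.mem_bot] at hx
      subst hx; exact h0
  exact Submodule.iSup_induction (motive := C) _ hx mem' h0 hadd

section ExpAlg

variable {A : Type*} [Ring A] [Algebra ℂ A]

/-- truncated exponential -/
noncomputable def E (K : ℕ) (u : A) : A := ∑ i ∈ Finset.range K, ((i).factorial : ℂ)⁻¹ • u ^ i

lemma coeff_eq {i j : ℕ} : ((i + j).factorial : ℂ)⁻¹ * ((i + j).choose i : ℂ) = ((i).factorial : ℂ)⁻¹ * ((j).factorial : ℂ)⁻¹ := by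
  have h := Nat.choose_mul_factorial_mul_factorial (Nat.le_add_right i j)
  have h2 : (i + j - i) = j := by omega
  rw [h2] at h
  have h3 : (((i+j).choose i : ℂ)) * ((i).factorial : ℂ) * ((j).factorial : ℂ) = ((i+j).factorial : ℂ) := by
    exact_mod_cast congrArg (Nat.cast : ℕ → ℂ) h
  have hi : ((i).factorial : ℂ) ≠ 0 := Nat.cast_ne_zero.2 (Nat.factorial_ne_zero i)
  have hj : ((j).factorial : ℂ) ≠ 0 := Nat.cast_ne_zero.2 (Nat.factorial_ne_zero j)
  have hij : ((i+j).factorial : ℂ) ≠ 0 := Nat.cast_ne_zero.2 (Nat.factorial_ne_zero (i+j))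
  have hC : (((i+j).choose i : ℕ) : ℂ) =
      ((i+j).factorial : ℂ) * ((i).factorial : ℂ)⁻¹ * ((j).factorial : ℂ)⁻¹ := by
    field_simp
    linear_combination h3
  rw [hC]
  field_simp

lemma Ekey {p q : A} {n : ℕ} (hpq : Commute p q) (hp : p ^ n = 0) (hq : q ^ n = 0) :
    E (2 * n) p * E (2 * n) q = E (2 * n) (p + q) := by
  classical
  set N := 2 * n with hN
  have hzero : ∀ i j : ℕ, n ≤ i ∨ n ≤ j →
      (((i).factorial : ℂ)⁻¹ * ((j).factorial : ℂ)⁻¹) • (p ^ i * q ^ j) = 0 := by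
    rintro i j (h | h)
    · rw [show i = n + (i - n) by omega, pow_add, hp, zero_mul, zero_mul, smul_zero]
    · rw [show j = n + (j - n) by omega, pow_add, hq, zero_mul, mul_zero, smul_zero]
  have lhs_eq : E N p * E N q =
      ∑ x ∈ Finset.range N ×ˢ Finset.range N,
        (((x.1).factorial : ℂ)⁻¹ * ((x.2).factorial : ℂ)⁻¹) • (p ^ x.1 * q ^ x.2) := by
    rw [E, E, Finset.sum_mul_sum, Finset.sum_product]
    refine Finset.sum_congr rfl fun i _ => Finset.sum_congr rfl fun j _ => ?_
    rw [smul_mul_smul_comm]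
  have rhs_eq : E N (p + q) =
      ∑ x ∈ (Finset.range N ×ˢ Finset.range N).filter (fun x => x.1 + x.2 < N),
        (((x.1).factorial : ℂ)⁻¹ * ((x.2).factorial : ℂ)⁻¹) • (p ^ x.1 * q ^ x.2) := by
    have step1 : ∀ k, ((k).factorial : ℂ)⁻¹ • (p + q) ^ k =
        ∑ m ∈ Finset.range (k + 1),
          (((m).factorial : ℂ)⁻¹ * ((k - m).factorial : ℂ)⁻¹) • (p ^ m * q ^ (k - m)) := by
      intro k
      rw [hpq.add_pow, Finset.smul_sum]
      refine Finset.sum_congr rfl fun m hm => ?_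
      have hm' : m ≤ k := Nat.lt_succ_iff.mp (Finset.mem_range.mp hm)
      have hcast : p ^ m * q ^ (k - m) * (k.choose m : A) =
          ((k.choose m : ℕ) : ℂ) • (p ^ m * q ^ (k - m)) := by
        rw [← (Nat.cast_commute (k.choose m) (p ^ m * q ^ (k - m))).eq, ← nsmul_eq_mul,
          Nat.cast_smul_eq_nsmul ℂ]
      rw [hcast, smul_smul]
      congr 1
      have hk : m + (k - m) = k := by omega
      calc ((k).factorial : ℂ)⁻¹ * ((k.choose m : ℕ) : ℂ)
          = ((m + (k - m)).factorial : ℂ)⁻¹ * (((m + (k - m)).choose m : ℕ) : ℂ) := by rw [hk]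
        _ = ((m).factorial : ℂ)⁻¹ * ((k - m).factorial : ℂ)⁻¹ := coeff_eq
    have step2 : E N (p + q) =
        ∑ x ∈ (Finset.range N).sigma (fun kk => Finset.range (kk + 1)),
          (((x.2).factorial : ℂ)⁻¹ * ((x.1 - x.2).factorial : ℂ)⁻¹) • (p ^ x.2 * q ^ (x.1 - x.2)) := by
      rw [E, Finset.sum_sigma]
      exact Finset.sum_congr rfl fun kk _ => step1 kk
    rw [step2]
    refine Finset.sum_bij' (fun x _ => (x.2, x.1 - x.2)) (fun y _ => ⟨y.1 + y.2, y.1⟩)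
      ?_ ?_ ?_ ?_ ?_
    · intro x hx
      simp only [Finset.mem_sigma, Finset.mem_range] at hx
      simp only [Finset.mem_filter, Finset.mem_product, Finset.mem_range]
      omega
    · intro y hy
      simp only [Finset.mem_filter, Finset.mem_product, Finset.mem_range] at hy
      simp only [Finset.mem_sigma, Finset.mem_range]
      omega
    · intro x hx
      simp only [Finset.mem_sigma, Finset.mem_range] at hx
      ext <;> simp <;> omega
    · intro y hy
      simp
    · intro x hx
      simp
  rw [lhs_eq, rhs_eq]
  refine (Finset.sum_subset (Finset.filter_subset _ _) ?_).symm
  intro x hx hnx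
  have hxp : x.1 < N ∧ x.2 < N := by simpa using Finset.mem_product.mp hx
  have hge : N ≤ x.1 + x.2 := by
    by_contra hlt
    exact hnx (Finset.mem_filter.mpr ⟨hx, by omega⟩)
  exact hzero x.1 x.2 (by omega)

lemma E_zero_eq_one {K : ℕ} (hK : K ≠ 0) : E K (0 : A) = 1 := by
  rw [E]
  have h1 : ∀ i ∈ Finset.range K, i ≠ 0 → ((i).factorial : ℂ)⁻¹ • (0:A)^i = 0 :=
    fun i _ hi => by rw [zero_pow hi, smul_zero]
  rw [Finset.sum_eq_single 0 h1
    (fun h => absurd (Finset.mem_range.mpr (Nat.pos_of_ne_zero hK)) h)]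
  simp

lemma E_mul_E_neg {u : A} {n : ℕ} (hn : n ≠ 0) (hu : u ^ n = 0) :
    E (2 * n) u * E (2 * n) (-u) = 1 := by
  have hneg : (-u) ^ n = 0 := by
    rw [neg_pow, hu, mul_zero]
  rw [Ekey (Commute.neg_right (Commute.refl u)) hu hneg, add_neg_cancel,
    E_zero_eq_one (by omega)]

lemma E_neg_mul_E {u : A} {n : ℕ} (hn : n ≠ 0) (hu : u ^ n = 0) :
    E (2 * n) (-u) * E (2 * n) u = 1 := by
  have hneg : (-u) ^ n = 0 := by rw [neg_pow, hu, mul_zero]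
  rw [Ekey (Commute.neg_left (Commute.refl u)) hneg hu, neg_add_cancel,
    E_zero_eq_one (by omega)]

end ExpAlg


section Conj

variable {k : ℕ}

/-- adjoint action as a linear endomorphism -/
noncomputable def adp (u : Matrix (Fin k) (Fin k) ℂ) :
    Module.End ℂ (Matrix (Fin k) (Fin k) ℂ) :=
  LinearMap.mulLeft ℂ u - LinearMap.mulRight ℂ u

lemma adp_apply (u m : Matrix (Fin k) (Fin k) ℂ) : adp u m = ⁅u, m⁆ := by
  simp only [adp, LinearMap.sub_apply, LinearMap.mulLeft_apply, LinearMap.mulRight_apply,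
    Ring.lie_def]

lemma conj_eq {u : Matrix (Fin k) (Fin k) ℂ} {n : ℕ} (hu : u ^ n = 0)
    (m : Matrix (Fin k) (Fin k) ℂ) :
    ∑ j ∈ Finset.range (2 * n), ((j).factorial : ℂ)⁻¹ • ((adp u) ^ j) m
      = E (2 * n) u * m * E (2 * n) (-u) := by
  have hL : (LinearMap.mulLeft ℂ u) ^ n = 0 := by
    rw [LinearMap.pow_mulLeft, hu]
    ext m'
    simp
  have hR : (LinearMap.mulRight ℂ (-u)) ^ n = 0 := by
    rw [LinearMap.pow_mulRight, neg_pow, hu, mul_zero]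
    ext m'
    simp
  have hcomm : Commute (LinearMap.mulLeft ℂ u) (LinearMap.mulRight ℂ (-u)) :=
    LinearMap.commute_mulLeft_right u (-u)
  have hsum : LinearMap.mulLeft ℂ u + LinearMap.mulRight ℂ (-u) = adp u := by
    ext m'
    simp only [adp, LinearMap.add_apply, LinearMap.sub_apply, LinearMap.neg_apply,
      LinearMap.mulLeft_apply, LinearMap.mulRight_apply, mul_neg, sub_eq_add_neg]
  have hkey := Ekey hcomm hL hR
  rw [hsum] at hkey
  have happ : (E (2 * n) (LinearMap.mulLeft ℂ u) * E (2 * n) (LinearMap.mulRight ℂ (-u))) m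
      = (E (2 * n) (adp u)) m := by rw [hkey]
  have hERm : (E (2 * n) (LinearMap.mulRight ℂ (-u))) m = m * E (2 * n) (-u) := by
    simp only [E, LinearMap.sum_apply, LinearMap.smul_apply, LinearMap.pow_mulRight,
      LinearMap.mulRight_apply, Finset.mul_sum, mul_smul_comm]
  have hELw : ∀ w, (E (2 * n) (LinearMap.mulLeft ℂ u)) w = E (2 * n) u * w := by
    intro w
    simp only [E, LinearMap.sum_apply, LinearMap.smul_apply, LinearMap.pow_mulLeft,
      LinearMap.mulLeft_apply, Finset.sum_mul, smul_mul_assoc]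
  have hEad : (E (2 * n) (adp u)) m
      = ∑ j ∈ Finset.range (2 * n), ((j).factorial : ℂ)⁻¹ • ((adp u) ^ j) m := by
    simp only [E, LinearMap.sum_apply, LinearMap.smul_apply]
  rw [← hEad, ← happ, Module.End.mul_apply, hERm, hELw, mul_assoc]

lemma exp_eq_E {u : Matrix (Fin k) (Fin k) ℂ} {n : ℕ} (hu : u ^ n = 0) :
    NormedSpace.exp u = E (2 * n) u := by
  rw [NormedSpace.exp_eq_tsum (𝕂 := ℂ), E]
  refine tsum_eq_sum (fun i hi => ?_)
  have hni : n ≤ i := by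
    simp only [Finset.mem_range, not_lt] at hi
    omega
  rw [show i = n + (i - n) by omega, pow_add, hu, zero_mul, smul_zero]

lemma DSI {x y z : Matrix (Fin k) (Fin k) ℂ} {n : ℕ} (hn : n ≠ 0)
    (hx : x ^ n = 0) (hy : y ^ n = 0) (hz : z ^ n = 0)
    (heq : E (2 * n) z = E (2 * n) x * E (2 * n) y) (m : Matrix (Fin k) (Fin k) ℂ) :
    ∑ j ∈ Finset.range (2 * n), ((j).factorial : ℂ)⁻¹ • ((adp z) ^ j) m
    = ∑ j ∈ Finset.range (2 * n), ((j).factorial : ℂ)⁻¹ •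
        (((adp x) ^ j) (∑ i ∈ Finset.range (2 * n), ((i).factorial : ℂ)⁻¹ • ((adp y) ^ i) m)) := by
  have h1 : E (2 * n) z * (E (2 * n) (-y) * E (2 * n) (-x)) = 1 := by
    rw [heq, mul_assoc, ← mul_assoc (E (2 * n) y), E_mul_E_neg hn hy, one_mul,
      E_mul_E_neg hn hx]
  have hinv : E (2 * n) (-z) = E (2 * n) (-y) * E (2 * n) (-x) := by
    calc E (2 * n) (-z) = E (2 * n) (-z) * (E (2 * n) z * (E (2 * n) (-y) * E (2 * n) (-x))) := by
          rw [h1, mul_one]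
      _ = (E (2 * n) (-z) * E (2 * n) z) * (E (2 * n) (-y) * E (2 * n) (-x)) := by
          rw [mul_assoc]
      _ = E (2 * n) (-y) * E (2 * n) (-x) := by rw [E_neg_mul_E hn hz, one_mul]
  rw [conj_eq hz m, conj_eq hy m, conj_eq hx (E (2 * n) y * m * E (2 * n) (-y)), heq, hinv]
  noncomm_ring

end Conj



lemma central_zero {k n : ℕ} (hn : n ≠ 0) {d : Matrix (Fin k) (Fin k) ℂ} (hd : d ^ n = 0)
    (h : ∀ m : Matrix (Fin k) (Fin k) ℂ, ⁅d, m⁆ = 0) : d = 0 := by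
  rcases eq_or_ne k 0 with rfl | hk
  · exact Subsingleton.elim _ _
  · obtain ⟨r, hr⟩ := Matrix.mem_range_scalar_of_commute_single
      (M := d) (fun i j _ => by
        have h2 := h (Matrix.single i j 1)
        rw [Ring.lie_def, sub_eq_zero] at h2
        exact h2.symm)
    have hd2 : Matrix.scalar (Fin k) (r ^ n) = 0 := by
      rw [map_pow, hr, hd]
    have i : Fin k := ⟨0, Nat.pos_of_ne_zero hk⟩
    have hrn : r ^ n = 0 := by
      have h3 := congrFun (congrFun (congrArg Matrix.of.symm hd2) i) i
      simpa [Matrix.scalar_apply, Matrix.diagonal_apply_eq] using h3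
    have hr0 : r = 0 := pow_eq_zero_iff hn |>.mp hrn
    rw [← hr, hr0, map_zero]

variable {k : ℕ} (gr : ℤ × ℤ → Submodule ℂ (Matrix (Fin k) (Fin k) ℂ))
variable [DirectSum.Decomposition gr]

/-- the `t`-component of `x`. -/
noncomputable def pr (t : ℤ × ℤ) (x : Matrix (Fin k) (Fin k) ℂ) : Matrix (Fin k) (Fin k) ℂ :=
  (decompose gr x t : Matrix (Fin k) (Fin k) ℂ)

lemma pr_mem (t x) : pr gr t x ∈ gr t := SetLike.coe_mem _

lemma pr_add (t x y) : pr gr t (x + y) = pr gr t x + pr gr t y := by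
  simp [pr, DirectSum.decompose_add]

lemma pr_sub (t x y) : pr gr t (x - y) = pr gr t x - pr gr t y := by
  simp [pr, DirectSum.decompose_sub]

lemma pr_smul (t) (r : ℂ) (x) : pr gr t (r • x) = r • pr gr t x := by
  unfold pr
  rw [DirectSum.decompose_smul]
  rfl

lemma pr_zero (t) : pr gr t 0 = 0 := by simp [pr]

lemma pr_sum {ι : Type*} (t) (s : Finset ι) (f : ι → Matrix (Fin k) (Fin k) ℂ) :
    pr gr t (∑ i ∈ s, f i) = ∑ i ∈ s, pr gr t (f i) := by
  classical
  induction s using Finset.induction with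
  | empty => simp [pr_zero]
  | @insert _ _ h ih => rw [Finset.sum_insert h, Finset.sum_insert h, pr_add, ih]

lemma pr_of_mem_same {t x} (h : x ∈ gr t) : pr gr t x = x :=
  DirectSum.decompose_of_mem_same gr h

lemma pr_of_mem_ne {s t : ℤ × ℤ} {x} (h : x ∈ gr s) (hst : s ≠ t) : pr gr t x = 0 :=
  DirectSum.decompose_of_mem_ne gr h hst

lemma pr_eq_zero_of_iSup {S : ℤ × ℤ → Prop} {f : ℤ × ℤ → ℤ × ℤ} {x}
    (hx : x ∈ ⨆ pq, ⨆ _ : S pq, gr (f pq)) {t} (ht : ∀ pq, S pq → f pq ≠ t) :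
    pr gr t x = 0 := by
  refine iSup2_induction (C := fun y => pr gr t y = 0) (fun pq => gr (f pq)) hx
    (fun pq hpq x hx => ?_) (pr_zero gr t) ?_
  · exact pr_of_mem_ne gr hx (ht pq hpq)
  · intro x y hx hy; rw [pr_add, hx, hy, add_zero]

/-- sum of all components is x -/
lemma sum_pr (x : Matrix (Fin k) (Fin k) ℂ) :
    ∑ t ∈ (decompose gr x).support, pr gr t x = x := by
  classical
  exact DirectSum.sum_support_decompose gr x

/-- subtracting a component leaves the rest -/
lemma rest_mem {S : ℤ × ℤ → Prop} {x}
    (hx : x ∈ ⨆ pq, ⨆ _ : S pq, gr pq) (t : ℤ × ℤ) :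
    x - pr gr t x ∈ ⨆ pq, ⨆ _ : S pq ∧ pq ≠ t, gr pq := by
  refine iSup2_induction
    (C := fun y => y - pr gr t y ∈ ⨆ pq, ⨆ _ : S pq ∧ pq ≠ t, gr pq) gr hx
    (fun pq hpq x hx => ?_) (by simp [pr_zero]) ?_
  · show x - pr gr t x ∈ _
    by_cases h : pq = t
    · subst h; rw [pr_of_mem_same gr hx, sub_self]; exact zero_mem _
    · rw [pr_of_mem_ne gr hx h, sub_zero]
      exact Submodule.mem_iSup_of_mem pq (by rw [iSup_pos ⟨hpq, h⟩]; exact hx)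
  · intro x y hx hy
    rw [pr_add]
    have h2 : x + y - (pr gr t x + pr gr t y) = (x - pr gr t x) + (y - pr gr t y) := by abel
    rw [h2]
    exact add_mem hx hy


variable {k : ℕ} (gr : ℤ × ℤ → Submodule ℂ (Matrix (Fin k) (Fin k) ℂ))
variable [DirectSum.Decomposition gr]

/-- admissible bidegrees -/
def Adm (pq : ℤ × ℤ) : Prop := pq ≠ 0 ∧ pq.1 ≤ 0 ∧ pq.2 ≤ 0

lemma adm_iff (pq : ℤ × ℤ) : Adm pq ↔ ¬(pq.1 = 0 ∧ pq.2 = 0) ∧ pq.1 ≤ 0 ∧ pq.2 ≤ 0 := by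
  unfold Adm
  simp only [Ne, Prod.ext_iff, Prod.fst_zero, Prod.snd_zero]

/-- total-weight filtration -/
noncomputable def P (w : ℤ) : Submodule ℂ (Matrix (Fin k) (Fin k) ℂ) :=
  ⨆ pq, ⨆ _ : pq.1 + pq.2 ≤ w, gr pq

lemma gr_le_P {t : ℤ × ℤ} {w : ℤ} (h : t.1 + t.2 ≤ w) : gr t ≤ P gr w :=
  le_iSup_of_le t (by rw [iSup_pos h])

lemma mem_P_of_iSup {S : ℤ × ℤ → Prop} {x} (hx : x ∈ ⨆ pq, ⨆ _ : S pq, gr pq)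
    {w : ℤ} (hS : ∀ pq, S pq → pq.1 + pq.2 ≤ w) : x ∈ P gr w := by
  refine iSup2_induction (C := fun y => y ∈ P gr w) gr hx (fun pq hpq x hx => ?_)
    (zero_mem _) (fun x y hx hy => add_mem hx hy)
  exact gr_le_P gr (hS pq hpq) hx

lemma P_mono {w w' : ℤ} (h : w ≤ w') : P gr w ≤ P gr w' := by
  intro x hx
  exact mem_P_of_iSup gr hx (fun pq hpq => le_trans hpq h)

lemma proj_P_zero {x} {w : ℤ} (hx : x ∈ P gr w) {t : ℤ × ℤ} (ht : w < t.1 + t.2) :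
    pr gr t x = 0 := by
  refine pr_eq_zero_of_iSup gr (f := id) hx (fun pq hpq => ?_)
  intro hne
  subst hne
  simp only [id] at ht
  omega

variable (hbracket : ∀ pq rs : ℤ × ℤ, ∀ x ∈ gr pq, ∀ y ∈ gr rs, ⁅x, y⁆ ∈ gr (pq + rs))
include hbracket

lemma bracket_mem_P {x y : Matrix (Fin k) (Fin k) ℂ} {w₁ w₂ : ℤ}
    (hx : x ∈ P gr w₁) (hy : y ∈ P gr w₂) : ⁅x, y⁆ ∈ P gr (w₁ + w₂) := by
  refine iSup2_induction (C := fun x => ⁅x, y⁆ ∈ P gr (w₁ + w₂)) gr hx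
    (fun pq hpq x hx => ?_) (by simp) (fun x x' hx hx' => by show ⁅x + x', _⁆ ∈ _; rw [add_lie]; exact add_mem hx hx')
  refine iSup2_induction (C := fun y => ⁅x, y⁆ ∈ P gr (w₁ + w₂)) gr hy
    (fun rs hrs y hy => ?_) (by simp) (fun y y' hy hy' => by show ⁅_, y + y'⁆ ∈ _; rw [lie_add]; exact add_mem hy hy')
  show ⁅x, y⁆ ∈ _
  refine gr_le_P gr ?_ (hbracket pq rs x hx y hy)
  have : (pq + rs).1 = pq.1 + rs.1 := rfl
  have : (pq + rs).2 = pq.2 + rs.2 := rfl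
  omega

lemma bracket_iSup_mem {S : ℤ × ℤ → Prop} {z} (hz : z ∈ ⨆ pq, ⨆ _ : S pq, gr pq)
    {rs : ℤ × ℤ} {v} (hv : v ∈ gr rs) :
    ⁅z, v⁆ ∈ ⨆ pq, ⨆ _ : S pq, gr (pq + rs) := by
  refine iSup2_induction (C := fun z => ⁅z, v⁆ ∈ ⨆ pq, ⨆ _ : S pq, gr (pq + rs)) gr hz
    (fun pq hpq x hx => ?_) (by simp) (fun x x' hx hx' => by show ⁅x + x', _⁆ ∈ _; rw [add_lie]; exact add_mem hx hx')
  exact Submodule.mem_iSup_of_mem pq (by rw [iSup_pos hpq]; exact hbracket pq rs x hx v hv)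

/-- key component formula for a single bracket -/
lemma proj_bracket {S : ℤ × ℤ → Prop} {z} (hz : z ∈ ⨆ pq, ⨆ _ : S pq, gr pq)
    {rs : ℤ × ℤ} {v} (hv : v ∈ gr rs) (t : ℤ × ℤ) :
    pr gr (t + rs) ⁅z, v⁆ = ⁅pr gr t z, v⁆ := by
  have hsplit : ⁅z, v⁆ = ⁅pr gr t z, v⁆ + ⁅z - pr gr t z, v⁆ := by
    rw [← add_lie]; congr 1; abel
  rw [hsplit, pr_add]
  have h1 : pr gr (t + rs) ⁅pr gr t z, v⁆ = ⁅pr gr t z, v⁆ :=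
    pr_of_mem_same gr (hbracket t rs _ (pr_mem gr t z) v hv)
  have h2 : pr gr (t + rs) ⁅z - pr gr t z, v⁆ = 0 := by
    refine pr_eq_zero_of_iSup gr
      (bracket_iSup_mem gr hbracket (rest_mem gr hz t) hv) (fun pq hpq => ?_)
    intro hne
    exact hpq.2 (by apply add_right_cancel hne)
  rw [h1, h2, add_zero]



lemma proj_bracket2 {z z' : Matrix (Fin k) (Fin k) ℂ}
    (hz : z ∈ ⨆ pq, ⨆ _ : Adm pq, gr pq) (hz' : z' ∈ ⨆ pq, ⨆ _ : Adm pq, gr pq)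
    {rs : ℤ × ℤ} {v} (hv : v ∈ gr rs) :
    pr gr ((-1, -1) + rs) ⁅z, ⁅z', v⁆⁆ =
      ⁅pr gr (0, -1) z, ⁅pr gr (-1, 0) z', v⁆⁆ +
        ⁅pr gr (-1, 0) z, ⁅pr gr (0, -1) z', v⁆⁆ := by
  obtain ⟨r1, r2⟩ := rs
  have hA' : pr gr (-1, 0) z' ∈ gr (-1, 0) := pr_mem gr _ _
  have hB' : pr gr (0, -1) z' ∈ gr (0, -1) := pr_mem gr _ _
  have hrest1 : z' - pr gr (-1, 0) z' ∈ ⨆ pq, ⨆ _ : Adm pq ∧ pq ≠ (-1, 0), gr pq :=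
    rest_mem gr hz' _
  have hprB : pr gr (0, -1) (z' - pr gr (-1, 0) z') = pr gr (0, -1) z' := by
    rw [pr_sub, pr_of_mem_ne gr hA' (by simp [Prod.ext_iff]), sub_zero]
  have hrest2 : z' - pr gr (-1, 0) z' - pr gr (0, -1) z' ∈
      ⨆ pq, ⨆ _ : (Adm pq ∧ pq ≠ (-1, 0)) ∧ pq ≠ (0, -1), gr pq := by
    have h := rest_mem gr hrest1 (0, -1)
    rwa [hprB] at h
  have hrP : z' - pr gr (-1, 0) z' - pr gr (0, -1) z' ∈ P gr (-2) := by
    refine mem_P_of_iSup gr hrest2 (fun pq hpq => ?_)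
    obtain ⟨⟨hadm, h1⟩, h2⟩ := hpq
    rw [adm_iff] at hadm
    have h1' : ¬(pq.1 = -1 ∧ pq.2 = 0) := by
      intro h; exact h1 (Prod.ext h.1 h.2)
    have h2' : ¬(pq.1 = 0 ∧ pq.2 = -1) := by
      intro h; exact h2 (Prod.ext h.1 h.2)
    omega
  have hzP : z ∈ P gr (-1) := by
    refine mem_P_of_iSup gr hz (fun pq hpq => ?_)
    rw [adm_iff] at hpq; omega
  have hsplit : ⁅z, ⁅z', v⁆⁆ = ⁅z, ⁅pr gr (-1, 0) z', v⁆⁆ + ⁅z, ⁅pr gr (0, -1) z', v⁆⁆ +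
      ⁅z, ⁅z' - pr gr (-1, 0) z' - pr gr (0, -1) z', v⁆⁆ := by
    rw [← lie_add, ← lie_add, ← add_lie, ← add_lie]
    congr 2
    abel
  rw [hsplit, pr_add, pr_add]
  have e1 : ((-1, -1) : ℤ × ℤ) + (r1, r2) = (0, -1) + ((-1, 0) + (r1, r2)) := by
    simp [Prod.ext_iff]
  have e2 : ((-1, -1) : ℤ × ℤ) + (r1, r2) = (-1, 0) + ((0, -1) + (r1, r2)) := by
    simp [Prod.ext_iff]
  have t1 : pr gr ((-1, -1) + (r1, r2)) ⁅z, ⁅pr gr (-1, 0) z', v⁆⁆ =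
      ⁅pr gr (0, -1) z, ⁅pr gr (-1, 0) z', v⁆⁆ := by
    rw [e1]
    exact proj_bracket gr hbracket hz (hbracket (-1, 0) (r1, r2) _ hA' v hv) (0, -1)
  have t2 : pr gr ((-1, -1) + (r1, r2)) ⁅z, ⁅pr gr (0, -1) z', v⁆⁆ =
      ⁅pr gr (-1, 0) z, ⁅pr gr (0, -1) z', v⁆⁆ := by
    rw [e2]
    exact proj_bracket gr hbracket hz (hbracket (0, -1) (r1, r2) _ hB' v hv) (-1, 0)
  have t3 : pr gr ((-1, -1) + (r1, r2))
      ⁅z, ⁅z' - pr gr (-1, 0) z' - pr gr (0, -1) z', v⁆⁆ = 0 := by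
    have hvP : v ∈ P gr (r1 + r2) := gr_le_P gr (by simp) hv
    have hm : ⁅z, ⁅z' - pr gr (-1, 0) z' - pr gr (0, -1) z', v⁆⁆ ∈
        P gr (-1 + (-2 + (r1 + r2))) :=
      bracket_mem_P gr hbracket hzP (bracket_mem_P gr hbracket hrP hvP)
    refine proj_P_zero gr hm ?_
    simp [Prod.ext_iff]
    omega
  rw [t1, t2, t3, add_zero]






lemma adp_pow_P {z : Matrix (Fin k) (Fin k) ℂ} (hz : z ∈ P gr (-1)) {w : ℤ}
    {v : Matrix (Fin k) (Fin k) ℂ} (hv : v ∈ P gr w) (j : ℕ) :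
    ((adp z) ^ j) v ∈ P gr (w - j) := by
  induction j with
  | zero => simpa using hv
  | succ j ih =>
      rw [pow_succ', Module.End.mul_apply, adp_apply]
      have h := bracket_mem_P gr hbracket hz ih
      have he : (-1 : ℤ) + (w - j) = w - (j + 1 : ℕ) := by push_cast; ring
      rwa [he] at h

omit hbracket in
lemma pr_shift_ne {t rs : ℤ × ℤ} (ht : t ≠ 0) {v} (hv : v ∈ gr rs) :
    pr gr (t + rs) v = 0 := by
  refine pr_of_mem_ne gr hv (fun h => ht ?_)
  have h2 : t + rs = 0 + rs := by rw [zero_add, ← h]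
  exact add_right_cancel h2

omit hbracket in
omit [DirectSum.Decomposition gr] in
lemma lie_sum' {ι : Type*} (d : Matrix (Fin k) (Fin k) ℂ) (s : Finset ι)
    (f : ι → Matrix (Fin k) (Fin k) ℂ) : ⁅d, ∑ i ∈ s, f i⁆ = ∑ i ∈ s, ⁅d, f i⁆ := by
  classical
  induction s using Finset.induction with
  | empty => simp
  | @insert _ _ h ih => rw [Finset.sum_insert h, Finset.sum_insert h, lie_add, ih]

/-- Extraction of weight -1 components from the group law. -/
lemma extract1 {x y z : Matrix (Fin k) (Fin k) ℂ} {n : ℕ} (hn : 2 ≤ n)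
    (hx : x ∈ ⨆ pq, ⨆ _ : Adm pq, gr pq)
    (hy : y ∈ ⨆ pq, ⨆ _ : Adm pq, gr pq)
    (hz : z ∈ ⨆ pq, ⨆ _ : Adm pq, gr pq)
    (hnil : ∀ w ∈ ⨆ pq, ⨆ _ : Adm pq, gr pq, w ^ n = 0)
    (hE : E (2 * n) z = E (2 * n) x * E (2 * n) y)
    {t : ℤ × ℤ} (hadm : Adm t) (ht : t.1 + t.2 = -1) :
    pr gr t z = pr gr t x + pr gr t y := by
  have hn0 : n ≠ 0 := by omega
  have ht0 : t ≠ 0 := hadm.1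
  have key : ∀ rs : ℤ × ℤ, ∀ v ∈ gr rs,
      ⁅pr gr t z, v⁆ = ⁅pr gr t x, v⁆ + ⁅pr gr t y, v⁆ := by
    intro rs v hv
    have hvP : v ∈ P gr (rs.1 + rs.2) := gr_le_P gr le_rfl hv
    have hxP : x ∈ P gr (-1) := mem_P_of_iSup gr hx (fun pq hpq => by rw [adm_iff] at hpq; omega)
    have hyP : y ∈ P gr (-1) := mem_P_of_iSup gr hy (fun pq hpq => by rw [adm_iff] at hpq; omega)
    have hzP : z ∈ P gr (-1) := mem_P_of_iSup gr hz (fun pq hpq => by rw [adm_iff] at hpq; omega)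
    have h := DSI hn0 (hnil x hx) (hnil y hy) (hnil z hz) hE v
    simp only [map_sum, map_smul] at h
    have hL := congrArg (pr gr (t + rs)) h
    rw [pr_sum, pr_sum] at hL
    simp only [pr_smul, pr_sum] at hL
    -- evaluate LHS
    have hLHS : ∑ j ∈ Finset.range (2 * n), ((j).factorial : ℂ)⁻¹ •
        pr gr (t + rs) (((adp z) ^ j) v) = ⁅pr gr t z, v⁆ := by
      rw [Finset.sum_eq_single 1]
      · rw [pow_one, adp_apply, proj_bracket gr hbracket hz hv t]
        simp
      · intro j hj hne
        rcases Nat.eq_zero_or_pos j with rfl | hj1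
        · rw [pow_zero, Module.End.one_apply, pr_shift_ne gr ht0 hv, smul_zero]
        · have hj2 : 2 ≤ j := by omega
          rw [proj_P_zero gr (adp_pow_P gr hbracket hzP hvP j) (by
            have h1 : (t + rs).1 = t.1 + rs.1 := rfl
            have h2 : (t + rs).2 = t.2 + rs.2 := rfl
            omega), smul_zero]
      · intro h1
        exact absurd (Finset.mem_range.mpr (by omega)) h1
    -- evaluate RHS
    have hRHS : ∑ j ∈ Finset.range (2 * n), ((j).factorial : ℂ)⁻¹ •
        ∑ i ∈ Finset.range (2 * n), ((i).factorial : ℂ)⁻¹ •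
          pr gr (t + rs) (((adp x) ^ j) (((adp y) ^ i) v))
        = ⁅pr gr t x, v⁆ + ⁅pr gr t y, v⁆ := by
      simp only [Finset.smul_sum, smul_smul]
      rw [← Finset.sum_product']
      have hsub : ({((1 : ℕ), (0 : ℕ)), ((0 : ℕ), (1 : ℕ))} : Finset (ℕ × ℕ)) ⊆
          Finset.range (2 * n) ×ˢ Finset.range (2 * n) := by
        intro p hp
        simp only [Finset.mem_insert, Finset.mem_singleton] at hp
        rcases hp with rfl | rfl <;>
          simp only [Finset.mem_product, Finset.mem_range] <;> omega
      rw [← Finset.sum_subset hsub]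
      · rw [Finset.sum_pair (by decide)]
        rw [pow_one, pow_zero, pow_zero, pow_one, Module.End.one_apply, Module.End.one_apply,
          adp_apply, adp_apply, proj_bracket gr hbracket hx hv t,
          proj_bracket gr hbracket hy hv t]
        simp
      · intro p hp hnp
        simp only [Finset.mem_product, Finset.mem_range] at hp
        simp only [Finset.mem_insert, Finset.mem_singleton] at hnp
        push_neg at hnp
        rcases Nat.eq_zero_or_pos (p.1 + p.2) with hsum0 | hpos
        · have h1 : p.1 = 0 := by omega
          have h2 : p.2 = 0 := by omega
          rw [h1, h2, pow_zero, pow_zero, Module.End.one_apply, Module.End.one_apply,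
            pr_shift_ne gr ht0 hv, smul_zero]
        · have h2 : 2 ≤ p.1 + p.2 := by
            rcases Nat.lt_or_ge (p.1 + p.2) 2 with hlt | hge
            · exfalso
              have : p.1 + p.2 = 1 := by omega
              have : (p.1 = 1 ∧ p.2 = 0) ∨ (p.1 = 0 ∧ p.2 = 1) := by omega
              rcases this with ⟨e1, e2⟩ | ⟨e1, e2⟩
              · exact hnp.1 (Prod.ext e1 e2)
              · exact hnp.2 (Prod.ext e1 e2)
            · exact hge
          have hin : ((adp x) ^ p.1) (((adp y) ^ p.2) v) ∈
              P gr ((rs.1 + rs.2) - p.2 - p.1) :=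
            adp_pow_P gr hbracket hxP (adp_pow_P gr hbracket hyP hvP p.2) p.1
          rw [proj_P_zero gr hin (by
            have h1 : (t + rs).1 = t.1 + rs.1 := rfl
            have h2 : (t + rs).2 = t.2 + rs.2 := rfl
            omega), smul_zero]
    rw [hLHS, hRHS] at hL
    exact hL
  -- conclude centrality
  have hall : ∀ m : Matrix (Fin k) (Fin k) ℂ,
      ⁅pr gr t z - pr gr t x - pr gr t y, m⁆ = 0 := by
    intro m
    conv_lhs => rw [← sum_pr gr m]
    rw [lie_sum']
    refine Finset.sum_eq_zero fun s _ => ?_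
    rw [sub_lie, sub_lie, key s _ (pr_mem gr s m)]
    abel
  have hmem : pr gr t z - pr gr t x - pr gr t y ∈ ⨆ pq, ⨆ _ : Adm pq, gr pq := by
    have hle : gr t ≤ ⨆ pq, ⨆ _ : Adm pq, gr pq :=
      le_iSup_of_le t (by rw [iSup_pos hadm])
    exact sub_mem (sub_mem (hle (pr_mem gr t z)) (hle (pr_mem gr t x))) (hle (pr_mem gr t y))
  have hd := central_zero (k := k) hn0 (hnil _ hmem) hall
  rw [sub_sub, sub_eq_zero] at hd
  exact hd


/-- Extraction of the (-1,-1) component from the group law. -/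
lemma extract2 {x y z : Matrix (Fin k) (Fin k) ℂ} {n : ℕ} (hn : 2 ≤ n)
    (hx : x ∈ ⨆ pq, ⨆ _ : Adm pq, gr pq)
    (hy : y ∈ ⨆ pq, ⨆ _ : Adm pq, gr pq)
    (hz : z ∈ ⨆ pq, ⨆ _ : Adm pq, gr pq)
    (hnil : ∀ w ∈ ⨆ pq, ⨆ _ : Adm pq, gr pq, w ^ n = 0)
    (hE : E (2 * n) z = E (2 * n) x * E (2 * n) y) :
    pr gr (-1, -1) z = pr gr (-1, -1) x + pr gr (-1, -1) y
      + (2⁻¹ : ℂ) • ⁅pr gr (-1, 0) x, pr gr (0, -1) y⁆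
      + (2⁻¹ : ℂ) • ⁅pr gr (0, -1) x, pr gr (-1, 0) y⁆ := by
  have hn0 : n ≠ 0 := by omega
  have hadm10 : Adm ((-1, 0) : ℤ × ℤ) := ⟨by decide, by norm_num, by norm_num⟩
  have hadm01 : Adm ((0, -1) : ℤ × ℤ) := ⟨by decide, by norm_num, by norm_num⟩
  have h10 : pr gr (-1, 0) z = pr gr (-1, 0) x + pr gr (-1, 0) y :=
    extract1 gr hbracket hn hx hy hz hnil hE hadm10 (by norm_num)
  have h01 : pr gr (0, -1) z = pr gr (0, -1) x + pr gr (0, -1) y :=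
    extract1 gr hbracket hn hx hy hz hnil hE hadm01 (by norm_num)
  have ht0 : ((-1, -1) : ℤ × ℤ) ≠ 0 := by decide
  have key : ∀ rs : ℤ × ℤ, ∀ v ∈ gr rs,
      ⁅pr gr (-1, -1) z, v⁆ = ⁅pr gr (-1, -1) x, v⁆ + ⁅pr gr (-1, -1) y, v⁆
        + (2⁻¹ : ℂ) • ⁅⁅pr gr (-1, 0) x, pr gr (0, -1) y⁆, v⁆
        + (2⁻¹ : ℂ) • ⁅⁅pr gr (0, -1) x, pr gr (-1, 0) y⁆, v⁆ := by
    intro rs v hv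
    have hvP : v ∈ P gr (rs.1 + rs.2) := gr_le_P gr le_rfl hv
    have hxP : x ∈ P gr (-1) := mem_P_of_iSup gr hx (fun pq hpq => by rw [adm_iff] at hpq; omega)
    have hyP : y ∈ P gr (-1) := mem_P_of_iSup gr hy (fun pq hpq => by rw [adm_iff] at hpq; omega)
    have hzP : z ∈ P gr (-1) := mem_P_of_iSup gr hz (fun pq hpq => by rw [adm_iff] at hpq; omega)
    have h := DSI hn0 (hnil x hx) (hnil y hy) (hnil z hz) hE v
    simp only [map_sum, map_smul] at h
    have hL := congrArg (pr gr ((-1, -1) + rs)) h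
    rw [pr_sum, pr_sum] at hL
    simp only [pr_smul, pr_sum] at hL
    have hLHS : ∑ j ∈ Finset.range (2 * n), ((j).factorial : ℂ)⁻¹ •
        pr gr ((-1, -1) + rs) (((adp z) ^ j) v)
        = ⁅pr gr (-1, -1) z, v⁆ + (2⁻¹ : ℂ) •
            (⁅pr gr (0, -1) z, ⁅pr gr (-1, 0) z, v⁆⁆ +
              ⁅pr gr (-1, 0) z, ⁅pr gr (0, -1) z, v⁆⁆) := by
      have hsub : ({1, 2} : Finset ℕ) ⊆ Finset.range (2 * n) := by
        intro j hj
        simp only [Finset.mem_insert, Finset.mem_singleton] at hj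
        rcases hj with rfl | rfl <;> (rw [Finset.mem_range]; omega)
      rw [← Finset.sum_subset hsub ?_]
      · rw [Finset.sum_pair (by decide : (1 : ℕ) ≠ 2)]
        have e1 : ((adp z) ^ 1) v = ⁅z, v⁆ := by rw [pow_one, adp_apply]
        have e2 : ((adp z) ^ 2) v = ⁅z, ⁅z, v⁆⁆ := by
          rw [pow_two, Module.End.mul_apply, adp_apply, adp_apply]
        rw [e1, e2, proj_bracket gr hbracket hz hv (-1, -1),
          proj_bracket2 gr hbracket hz hz hv]
        norm_num [Nat.factorial]
      · intro j hj hnj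
        simp only [Finset.mem_insert, Finset.mem_singleton] at hnj
        push_neg at hnj
        rcases Nat.eq_zero_or_pos j with rfl | hj1
        · rw [pow_zero, Module.End.one_apply, pr_shift_ne gr ht0 hv, smul_zero]
        · have hj3 : 3 ≤ j := by omega
          rw [proj_P_zero gr (adp_pow_P gr hbracket hzP hvP j) (by
            have h1 : (((-1, -1) : ℤ × ℤ) + rs).1 = -1 + rs.1 := rfl
            have h2 : (((-1, -1) : ℤ × ℤ) + rs).2 = -1 + rs.2 := rfl
            omega), smul_zero]
    have hRHS : ∑ j ∈ Finset.range (2 * n), ((j).factorial : ℂ)⁻¹ •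
        ∑ i ∈ Finset.range (2 * n), ((i).factorial : ℂ)⁻¹ •
          pr gr ((-1, -1) + rs) (((adp x) ^ j) (((adp y) ^ i) v))
        = ⁅pr gr (-1, -1) x, v⁆ + ⁅pr gr (-1, -1) y, v⁆
          + (2⁻¹ : ℂ) • (⁅pr gr (0, -1) x, ⁅pr gr (-1, 0) x, v⁆⁆ +
              ⁅pr gr (-1, 0) x, ⁅pr gr (0, -1) x, v⁆⁆)
          + (⁅pr gr (0, -1) x, ⁅pr gr (-1, 0) y, v⁆⁆ +
              ⁅pr gr (-1, 0) x, ⁅pr gr (0, -1) y, v⁆⁆)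
          + (2⁻¹ : ℂ) • (⁅pr gr (0, -1) y, ⁅pr gr (-1, 0) y, v⁆⁆ +
              ⁅pr gr (-1, 0) y, ⁅pr gr (0, -1) y, v⁆⁆) := by
      simp only [Finset.smul_sum, smul_smul]
      rw [← Finset.sum_product']
      have hsub : ({((1 : ℕ), (0 : ℕ)), ((0 : ℕ), (1 : ℕ)), ((2 : ℕ), (0 : ℕ)),
          ((1 : ℕ), (1 : ℕ)), ((0 : ℕ), (2 : ℕ))} : Finset (ℕ × ℕ)) ⊆
          Finset.range (2 * n) ×ˢ Finset.range (2 * n) := by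
        intro p hp
        simp only [Finset.mem_insert, Finset.mem_singleton] at hp
        rcases hp with rfl | rfl | rfl | rfl | rfl <;> simp <;> omega
      rw [← Finset.sum_subset hsub ?_]
      · rw [show ({((1 : ℕ), (0 : ℕ)), ((0 : ℕ), (1 : ℕ)), ((2 : ℕ), (0 : ℕ)),
            ((1 : ℕ), (1 : ℕ)), ((0 : ℕ), (2 : ℕ))} : Finset (ℕ × ℕ)) =
            insert ((1 : ℕ), (0 : ℕ)) (insert ((0 : ℕ), (1 : ℕ)) (insert ((2 : ℕ), (0 : ℕ))
              (insert ((1 : ℕ), (1 : ℕ)) {((0 : ℕ), (2 : ℕ))}))) from rfl,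
          Finset.sum_insert (by decide), Finset.sum_insert (by decide),
          Finset.sum_insert (by decide), Finset.sum_insert (by decide),
          Finset.sum_singleton]
        have e10 : ((adp x) ^ 1) (((adp y) ^ 0) v) = ⁅x, v⁆ := by
          rw [pow_one, pow_zero, Module.End.one_apply, adp_apply]
        have e01 : ((adp x) ^ 0) (((adp y) ^ 1) v) = ⁅y, v⁆ := by
          rw [pow_one, pow_zero, Module.End.one_apply, adp_apply]
        have e20 : ((adp x) ^ 2) (((adp y) ^ 0) v) = ⁅x, ⁅x, v⁆⁆ := by
          rw [pow_two, pow_zero, Module.End.one_apply, Module.End.mul_apply, adp_apply, adp_apply]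
        have e11 : ((adp x) ^ 1) (((adp y) ^ 1) v) = ⁅x, ⁅y, v⁆⁆ := by
          rw [pow_one, pow_one, adp_apply, adp_apply]
        have e02 : ((adp x) ^ 0) (((adp y) ^ 2) v) = ⁅y, ⁅y, v⁆⁆ := by
          rw [pow_zero, pow_two, Module.End.one_apply, Module.End.mul_apply, adp_apply, adp_apply]
        rw [e10, e01, e20, e11, e02,
          proj_bracket gr hbracket hx hv (-1, -1), proj_bracket gr hbracket hy hv (-1, -1),
          proj_bracket2 gr hbracket hx hx hv, proj_bracket2 gr hbracket hx hy hv,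
          proj_bracket2 gr hbracket hy hy hv]
        norm_num [Nat.factorial]
        abel
      · intro p hp hnp
        simp only [Finset.mem_product, Finset.mem_range] at hp
        simp only [Finset.mem_insert, Finset.mem_singleton] at hnp
        push_neg at hnp
        rcases Nat.eq_zero_or_pos (p.1 + p.2) with hsum0 | hpos
        · have h1 : p.1 = 0 := by omega
          have h2 : p.2 = 0 := by omega
          rw [h1, h2, pow_zero, pow_zero, Module.End.one_apply, Module.End.one_apply,
            pr_shift_ne gr ht0 hv, smul_zero]
        · have h3 : 3 ≤ p.1 + p.2 := by
            by_contra hlt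
            have hc : (p.1 = 1 ∧ p.2 = 0) ∨ (p.1 = 0 ∧ p.2 = 1) ∨ (p.1 = 2 ∧ p.2 = 0) ∨
                (p.1 = 1 ∧ p.2 = 1) ∨ (p.1 = 0 ∧ p.2 = 2) := by omega
            rcases hc with ⟨e1, e2⟩ | ⟨e1, e2⟩ | ⟨e1, e2⟩ | ⟨e1, e2⟩ | ⟨e1, e2⟩
            · exact hnp.1 (Prod.ext e1 e2)
            · exact hnp.2.1 (Prod.ext e1 e2)
            · exact hnp.2.2.1 (Prod.ext e1 e2)
            · exact hnp.2.2.2.1 (Prod.ext e1 e2)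
            · exact hnp.2.2.2.2 (Prod.ext e1 e2)
          have hin : ((adp x) ^ p.1) (((adp y) ^ p.2) v) ∈
              P gr ((rs.1 + rs.2) - p.2 - p.1) :=
            adp_pow_P gr hbracket hxP (adp_pow_P gr hbracket hyP hvP p.2) p.1
          rw [proj_P_zero gr hin (by
            have h1 : (((-1, -1) : ℤ × ℤ) + rs).1 = -1 + rs.1 := rfl
            have h2 : (((-1, -1) : ℤ × ℤ) + rs).2 = -1 + rs.2 := rfl
            omega), smul_zero]
    rw [hLHS, hRHS, h10, h01] at hL
    have hz_eq := eq_sub_of_add_eq hL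
    rw [hz_eq, lie_lie, lie_lie]
    simp only [lie_add, add_lie]
    module
  -- conclude centrality
  have hall : ∀ m : Matrix (Fin k) (Fin k) ℂ,
      ⁅pr gr (-1, -1) z - pr gr (-1, -1) x - pr gr (-1, -1) y
        - (2⁻¹ : ℂ) • ⁅pr gr (-1, 0) x, pr gr (0, -1) y⁆
        - (2⁻¹ : ℂ) • ⁅pr gr (0, -1) x, pr gr (-1, 0) y⁆, m⁆ = 0 := by
    intro m
    conv_lhs => rw [← sum_pr gr m]
    rw [lie_sum']
    refine Finset.sum_eq_zero fun s _ => ?_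
    rw [sub_lie, sub_lie, sub_lie, sub_lie, smul_lie, smul_lie, key s _ (pr_mem gr s m)]
    abel
  have hle : ∀ u : ℤ × ℤ, Adm u → gr u ≤ ⨆ pq, ⨆ _ : Adm pq, gr pq := fun u hu =>
    le_iSup_of_le u (by rw [iSup_pos hu])
  have hadm11 : Adm ((-1, -1) : ℤ × ℤ) := ⟨by decide, by norm_num, by norm_num⟩
  have hbr1 : ⁅pr gr (-1, 0) x, pr gr (0, -1) y⁆ ∈ gr (-1, -1) := by
    have h := hbracket (-1, 0) (0, -1) _ (pr_mem gr (-1, 0) x) _ (pr_mem gr (0, -1) y)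
    rwa [show ((-1, 0) : ℤ × ℤ) + (0, -1) = (-1, -1) from rfl] at h
  have hbr2 : ⁅pr gr (0, -1) x, pr gr (-1, 0) y⁆ ∈ gr (-1, -1) := by
    have h := hbracket (0, -1) (-1, 0) _ (pr_mem gr (0, -1) x) _ (pr_mem gr (-1, 0) y)
    rwa [show ((0, -1) : ℤ × ℤ) + (-1, 0) = (-1, -1) from rfl] at h
  have hmem : pr gr (-1, -1) z - pr gr (-1, -1) x - pr gr (-1, -1) y
      - (2⁻¹ : ℂ) • ⁅pr gr (-1, 0) x, pr gr (0, -1) y⁆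
      - (2⁻¹ : ℂ) • ⁅pr gr (0, -1) x, pr gr (-1, 0) y⁆ ∈ ⨆ pq, ⨆ _ : Adm pq, gr pq := by
    refine sub_mem (sub_mem (sub_mem (sub_mem ?_ ?_) ?_) ?_) ?_ <;>
      apply hle _ hadm11
    · exact pr_mem gr _ z
    · exact pr_mem gr _ x
    · exact pr_mem gr _ y
    · exact Submodule.smul_mem _ _ hbr1
    · exact Submodule.smul_mem _ _ hbr2
  have hd := central_zero (k := k) hn0 (hnil _ hmem) hall
  have h' : pr gr (-1, -1) z - (pr gr (-1, -1) x + pr gr (-1, -1) y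
      + (2⁻¹ : ℂ) • ⁅pr gr (-1, 0) x, pr gr (0, -1) y⁆
      + (2⁻¹ : ℂ) • ⁅pr gr (0, -1) x, pr gr (-1, 0) y⁆) = 0 := by
    rw [← hd]
    abel
  exact sub_eq_zero.mp h'

end Stmt10

open NormedSpace DirectSum in
/-- For `γᵢ = exp cᵢ = exp aᵢ · exp bᵢ` (i = 1,2) in the unipotent group of a
bigraded nilpotent Lie algebra `m⁻¹` (with `aᵢ ∈ m ∩ f^⊥`, `bᵢ ∈ m⁻¹ ∩ f`), and
`γ = γ₁γ₂ = exp c = exp a · exp b` factored likewise, the bigraded components satisfy: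
`a^{-1,0} = a₁^{-1,0} + a₂^{-1,0}`; `b^{0,-1} = b₁^{0,-1} + b₂^{0,-1}`;
`c^{-1,-1} = c₁^{-1,-1} + c₂^{-1,-1} + ½[a₁^{-1,0}, b₂^{0,-1}] + ½[b₁^{0,-1}, a₂^{-1,0}]`;
`a^{-1,-1} = a₁^{-1,-1} + a₂^{-1,-1} + [b₁^{0,-1}, a₂^{-1,0}]`. -/
theorem stmt10
    (k : ℕ)
    (gr : ℤ × ℤ → Submodule ℂ (Matrix (Fin k) (Fin k) ℂ))
    [DirectSum.Decomposition gr]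
    (hbracket : ∀ pq rs : ℤ × ℤ, ∀ x ∈ gr pq, ∀ y ∈ gr rs, ⁅x, y⁆ ∈ gr (pq + rs))
    (mminus : Submodule ℂ (Matrix (Fin k) (Fin k) ℂ))
    (hmminus : mminus =
      ⨆ (pq : ℤ × ℤ) (_ : pq ≠ 0 ∧ pq.1 ≤ 0 ∧ pq.2 ≤ 0), gr pq)
    (hnil : ∃ n : ℕ, ∀ x ∈ mminus, x ^ n = 0)
    (a₁ b₁ c₁ a₂ b₂ c₂ a b c : Matrix (Fin k) (Fin k) ℂ)
    (ha₁ : a₁ ∈ ⨆ (pq : ℤ × ℤ) (_ : pq.1 < 0 ∧ pq.2 ≤ 0), gr pq)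
    (ha₂ : a₂ ∈ ⨆ (pq : ℤ × ℤ) (_ : pq.1 < 0 ∧ pq.2 ≤ 0), gr pq)
    (ha : a ∈ ⨆ (pq : ℤ × ℤ) (_ : pq.1 < 0 ∧ pq.2 ≤ 0), gr pq)
    (hb₁ : b₁ ∈ ⨆ (pq : ℤ × ℤ) (_ : pq.1 = 0 ∧ pq.2 < 0), gr pq)
    (hb₂ : b₂ ∈ ⨆ (pq : ℤ × ℤ) (_ : pq.1 = 0 ∧ pq.2 < 0), gr pq)
    (hb : b ∈ ⨆ (pq : ℤ × ℤ) (_ : pq.1 = 0 ∧ pq.2 < 0), gr pq)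
    (hc₁ : c₁ ∈ mminus) (hc₂ : c₂ ∈ mminus) (hc : c ∈ mminus)
    (hfac₁ : exp c₁ = exp a₁ * exp b₁)
    (hfac₂ : exp c₂ = exp a₂ * exp b₂)
    (hprod : exp c = exp c₁ * exp c₂)
    (hfac : exp c = exp a * exp b) :
    ((decompose gr a (-1, 0) : Matrix (Fin k) (Fin k) ℂ) =
      (decompose gr a₁ (-1, 0) : Matrix (Fin k) (Fin k) ℂ) + decompose gr a₂ (-1, 0)) ∧
    ((decompose gr b (0, -1) : Matrix (Fin k) (Fin k) ℂ) =
      (decompose gr b₁ (0, -1) : Matrix (Fin k) (Fin k) ℂ) + decompose gr b₂ (0, -1)) ∧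
    ((decompose gr c (-1, -1) : Matrix (Fin k) (Fin k) ℂ) =
      (decompose gr c₁ (-1, -1) : Matrix (Fin k) (Fin k) ℂ) + decompose gr c₂ (-1, -1) +
        (2⁻¹ : ℂ) • ⁅(decompose gr a₁ (-1, 0) : Matrix (Fin k) (Fin k) ℂ),
            (decompose gr b₂ (0, -1) : Matrix (Fin k) (Fin k) ℂ)⁆ +
        (2⁻¹ : ℂ) • ⁅(decompose gr b₁ (0, -1) : Matrix (Fin k) (Fin k) ℂ),
            (decompose gr a₂ (-1, 0) : Matrix (Fin k) (Fin k) ℂ)⁆) ∧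
    ((decompose gr a (-1, -1) : Matrix (Fin k) (Fin k) ℂ) =
      (decompose gr a₁ (-1, -1) : Matrix (Fin k) (Fin k) ℂ) + decompose gr a₂ (-1, -1) +
        ⁅(decompose gr b₁ (0, -1) : Matrix (Fin k) (Fin k) ℂ),
          (decompose gr a₂ (-1, 0) : Matrix (Fin k) (Fin k) ℂ)⁆) := by
  classical
  letI : LieRing (Matrix (Fin k) (Fin k) ℂ) := LieRing.ofAssociativeRing
  obtain ⟨n₀, hn₀⟩ := hnil
  set n : ℕ := n₀ + 2 with hndef
  have hn2 : 2 ≤ n := by omega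
  have hnil' : ∀ w ∈ ⨆ pq, ⨆ _ : Stmt10.Adm pq, gr pq, w ^ n = 0 := by
    intro w hw
    have hwm : w ∈ mminus := by rw [hmminus]; exact hw
    have h0 := hn₀ w hwm
    rw [hndef, pow_add, h0, zero_mul]
  have hAle : (⨆ (pq : ℤ × ℤ) (_ : pq.1 < 0 ∧ pq.2 ≤ 0), gr pq) ≤
      ⨆ pq, ⨆ _ : Stmt10.Adm pq, gr pq := by
    refine iSup_le fun pq => iSup_le fun hpq => le_iSup_of_le pq ?_
    rw [iSup_pos (show Stmt10.Adm pq from ⟨fun h0 => by rw [h0] at hpq; simp at hpq,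
      by omega, hpq.2⟩)]
  have hBle : (⨆ (pq : ℤ × ℤ) (_ : pq.1 = 0 ∧ pq.2 < 0), gr pq) ≤
      ⨆ pq, ⨆ _ : Stmt10.Adm pq, gr pq := by
    refine iSup_le fun pq => iSup_le fun hpq => le_iSup_of_le pq ?_
    rw [iSup_pos (show Stmt10.Adm pq from ⟨fun h0 => by rw [h0] at hpq; simp at hpq,
      by omega, by omega⟩)]
  have hax : a ∈ ⨆ pq, ⨆ _ : Stmt10.Adm pq, gr pq := hAle ha
  have hax₁ : a₁ ∈ ⨆ pq, ⨆ _ : Stmt10.Adm pq, gr pq := hAle ha₁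
  have hax₂ : a₂ ∈ ⨆ pq, ⨆ _ : Stmt10.Adm pq, gr pq := hAle ha₂
  have hbx : b ∈ ⨆ pq, ⨆ _ : Stmt10.Adm pq, gr pq := hBle hb
  have hbx₁ : b₁ ∈ ⨆ pq, ⨆ _ : Stmt10.Adm pq, gr pq := hBle hb₁
  have hbx₂ : b₂ ∈ ⨆ pq, ⨆ _ : Stmt10.Adm pq, gr pq := hBle hb₂
  have hcx : c ∈ ⨆ pq, ⨆ _ : Stmt10.Adm pq, gr pq := by rw [hmminus] at hc; exact hc
  have hcx₁ : c₁ ∈ ⨆ pq, ⨆ _ : Stmt10.Adm pq, gr pq := by rw [hmminus] at hc₁; exact hc₁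
  have hcx₂ : c₂ ∈ ⨆ pq, ⨆ _ : Stmt10.Adm pq, gr pq := by rw [hmminus] at hc₂; exact hc₂
  -- convert exp equations to truncated equations
  have hEfac : Stmt10.E (2 * n) c = Stmt10.E (2 * n) a * Stmt10.E (2 * n) b := by
    rw [← Stmt10.exp_eq_E (hnil' c hcx), ← Stmt10.exp_eq_E (hnil' a hax),
      ← Stmt10.exp_eq_E (hnil' b hbx)]
    exact hfac
  have hEfac₁ : Stmt10.E (2 * n) c₁ = Stmt10.E (2 * n) a₁ * Stmt10.E (2 * n) b₁ := by
    rw [← Stmt10.exp_eq_E (hnil' c₁ hcx₁), ← Stmt10.exp_eq_E (hnil' a₁ hax₁),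
      ← Stmt10.exp_eq_E (hnil' b₁ hbx₁)]
    exact hfac₁
  have hEfac₂ : Stmt10.E (2 * n) c₂ = Stmt10.E (2 * n) a₂ * Stmt10.E (2 * n) b₂ := by
    rw [← Stmt10.exp_eq_E (hnil' c₂ hcx₂), ← Stmt10.exp_eq_E (hnil' a₂ hax₂),
      ← Stmt10.exp_eq_E (hnil' b₂ hbx₂)]
    exact hfac₂
  have hEprod : Stmt10.E (2 * n) c = Stmt10.E (2 * n) c₁ * Stmt10.E (2 * n) c₂ := by
    rw [← Stmt10.exp_eq_E (hnil' c hcx), ← Stmt10.exp_eq_E (hnil' c₁ hcx₁),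
      ← Stmt10.exp_eq_E (hnil' c₂ hcx₂)]
    exact hprod
  have hadm10 : Stmt10.Adm ((-1, 0) : ℤ × ℤ) := ⟨by decide, by norm_num, by norm_num⟩
  have hadm01 : Stmt10.Adm ((0, -1) : ℤ × ℤ) := ⟨by decide, by norm_num, by norm_num⟩
  -- vanishing of irrelevant components
  have hb_t1 : Stmt10.pr gr (-1, 0) b = 0 :=
    Stmt10.pr_eq_zero_of_iSup gr (f := id) hb (fun pq hpq h => by
      rw [id] at h; rw [h] at hpq; norm_num at hpq)
  have hb1_t1 : Stmt10.pr gr (-1, 0) b₁ = 0 :=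
    Stmt10.pr_eq_zero_of_iSup gr (f := id) hb₁ (fun pq hpq h => by
      rw [id] at h; rw [h] at hpq; norm_num at hpq)
  have hb2_t1 : Stmt10.pr gr (-1, 0) b₂ = 0 :=
    Stmt10.pr_eq_zero_of_iSup gr (f := id) hb₂ (fun pq hpq h => by
      rw [id] at h; rw [h] at hpq; norm_num at hpq)
  have hb_t3 : Stmt10.pr gr (-1, -1) b = 0 :=
    Stmt10.pr_eq_zero_of_iSup gr (f := id) hb (fun pq hpq h => by
      rw [id] at h; rw [h] at hpq; norm_num at hpq)
  have ha_t2 : Stmt10.pr gr (0, -1) a = 0 :=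
    Stmt10.pr_eq_zero_of_iSup gr (f := id) ha (fun pq hpq h => by
      rw [id] at h; rw [h] at hpq; norm_num at hpq)
  have ha1_t2 : Stmt10.pr gr (0, -1) a₁ = 0 :=
    Stmt10.pr_eq_zero_of_iSup gr (f := id) ha₁ (fun pq hpq h => by
      rw [id] at h; rw [h] at hpq; norm_num at hpq)
  have ha2_t2 : Stmt10.pr gr (0, -1) a₂ = 0 :=
    Stmt10.pr_eq_zero_of_iSup gr (f := id) ha₂ (fun pq hpq h => by
      rw [id] at h; rw [h] at hpq; norm_num at hpq)
  have hb1_t3 : Stmt10.pr gr (-1, -1) b₁ = 0 :=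
    Stmt10.pr_eq_zero_of_iSup gr (f := id) hb₁ (fun pq hpq h => by
      rw [id] at h; rw [h] at hpq; norm_num at hpq)
  have hb2_t3 : Stmt10.pr gr (-1, -1) b₂ = 0 :=
    Stmt10.pr_eq_zero_of_iSup gr (f := id) hb₂ (fun pq hpq h => by
      rw [id] at h; rw [h] at hpq; norm_num at hpq)
  -- weight-1 extractions
  have q_fac_t1 := Stmt10.extract1 gr hbracket hn2 hax hbx hcx hnil' hEfac hadm10 (by norm_num)
  have q_fac_t2 := Stmt10.extract1 gr hbracket hn2 hax hbx hcx hnil' hEfac hadm01 (by norm_num)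
  have q_fac1_t1 := Stmt10.extract1 gr hbracket hn2 hax₁ hbx₁ hcx₁ hnil' hEfac₁ hadm10 (by norm_num)
  have q_fac1_t2 := Stmt10.extract1 gr hbracket hn2 hax₁ hbx₁ hcx₁ hnil' hEfac₁ hadm01 (by norm_num)
  have q_fac2_t1 := Stmt10.extract1 gr hbracket hn2 hax₂ hbx₂ hcx₂ hnil' hEfac₂ hadm10 (by norm_num)
  have q_fac2_t2 := Stmt10.extract1 gr hbracket hn2 hax₂ hbx₂ hcx₂ hnil' hEfac₂ hadm01 (by norm_num)
  have q_prod_t1 := Stmt10.extract1 gr hbracket hn2 hcx₁ hcx₂ hcx hnil' hEprod hadm10 (by norm_num)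
  have q_prod_t2 := Stmt10.extract1 gr hbracket hn2 hcx₁ hcx₂ hcx hnil' hEprod hadm01 (by norm_num)
  -- (-1,-1) extractions
  have q_fac_t3 := Stmt10.extract2 gr hbracket hn2 hax hbx hcx hnil' hEfac
  have q_fac1_t3 := Stmt10.extract2 gr hbracket hn2 hax₁ hbx₁ hcx₁ hnil' hEfac₁
  have q_fac2_t3 := Stmt10.extract2 gr hbracket hn2 hax₂ hbx₂ hcx₂ hnil' hEfac₂
  have q_prod_t3 := Stmt10.extract2 gr hbracket hn2 hcx₁ hcx₂ hcx hnil' hEprod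
  -- identifications of c-components
  have c1_t1 : Stmt10.pr gr (-1, 0) c₁ = Stmt10.pr gr (-1, 0) a₁ := by
    rw [q_fac1_t1, hb1_t1, add_zero]
  have c2_t1 : Stmt10.pr gr (-1, 0) c₂ = Stmt10.pr gr (-1, 0) a₂ := by
    rw [q_fac2_t1, hb2_t1, add_zero]
  have c1_t2 : Stmt10.pr gr (0, -1) c₁ = Stmt10.pr gr (0, -1) b₁ := by
    rw [q_fac1_t2, ha1_t2, zero_add]
  have c2_t2 : Stmt10.pr gr (0, -1) c₂ = Stmt10.pr gr (0, -1) b₂ := by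
    rw [q_fac2_t2, ha2_t2, zero_add]
  have d1 : Stmt10.pr gr (-1, 0) a = Stmt10.pr gr (-1, 0) a₁ + Stmt10.pr gr (-1, 0) a₂ := by
    have h1 : Stmt10.pr gr (-1, 0) a = Stmt10.pr gr (-1, 0) c := by
      rw [q_fac_t1, hb_t1, add_zero]
    rw [h1, q_prod_t1, c1_t1, c2_t1]
  have d2 : Stmt10.pr gr (0, -1) b = Stmt10.pr gr (0, -1) b₁ + Stmt10.pr gr (0, -1) b₂ := by
    have h1 : Stmt10.pr gr (0, -1) b = Stmt10.pr gr (0, -1) c := by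
      rw [q_fac_t2, ha_t2, zero_add]
    rw [h1, q_prod_t2, c1_t2, c2_t2]
  have goal3 : Stmt10.pr gr (-1, -1) c = Stmt10.pr gr (-1, -1) c₁ + Stmt10.pr gr (-1, -1) c₂
      + (2⁻¹ : ℂ) • ⁅Stmt10.pr gr (-1, 0) a₁, Stmt10.pr gr (0, -1) b₂⁆
      + (2⁻¹ : ℂ) • ⁅Stmt10.pr gr (0, -1) b₁, Stmt10.pr gr (-1, 0) a₂⁆ := by
    rw [q_prod_t3, c1_t1, c2_t2, c1_t2, c2_t1]
  have goal4 : Stmt10.pr gr (-1, -1) a = Stmt10.pr gr (-1, -1) a₁ + Stmt10.pr gr (-1, -1) a₂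
      + ⁅Stmt10.pr gr (0, -1) b₁, Stmt10.pr gr (-1, 0) a₂⁆ := by
    have hc_t3 : Stmt10.pr gr (-1, -1) c = Stmt10.pr gr (-1, -1) a
        + (2⁻¹ : ℂ) • ⁅Stmt10.pr gr (-1, 0) a, Stmt10.pr gr (0, -1) b⁆ := by
      rw [q_fac_t3, hb_t3, add_zero, ha_t2, zero_lie, smul_zero, add_zero]
    have hc1_t3 : Stmt10.pr gr (-1, -1) c₁ = Stmt10.pr gr (-1, -1) a₁
        + (2⁻¹ : ℂ) • ⁅Stmt10.pr gr (-1, 0) a₁, Stmt10.pr gr (0, -1) b₁⁆ := by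
      rw [q_fac1_t3, hb1_t3, add_zero, ha1_t2, zero_lie, smul_zero, add_zero]
    have hc2_t3 : Stmt10.pr gr (-1, -1) c₂ = Stmt10.pr gr (-1, -1) a₂
        + (2⁻¹ : ℂ) • ⁅Stmt10.pr gr (-1, 0) a₂, Stmt10.pr gr (0, -1) b₂⁆ := by
      rw [q_fac2_t3, hb2_t3, add_zero, ha2_t2, zero_lie, smul_zero, add_zero]
    have ha4 : Stmt10.pr gr (-1, -1) a = Stmt10.pr gr (-1, -1) c
        - (2⁻¹ : ℂ) • ⁅Stmt10.pr gr (-1, 0) a, Stmt10.pr gr (0, -1) b⁆ := by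
      rw [hc_t3]; abel
    rw [ha4, goal3, hc1_t3, hc2_t3, d1, d2]
    simp only [lie_add, add_lie]
    rw [show ⁅Stmt10.pr gr (-1, 0) a₂, Stmt10.pr gr (0, -1) b₁⁆ =
        -⁅Stmt10.pr gr (0, -1) b₁, Stmt10.pr gr (-1, 0) a₂⁆ from (lie_skew _ _).symm]
    module
  exact ⟨d1, d2, goal3, goal4⟩
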